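/- Every arrow of the groupoid Cptr is the composite of a finite (directed) sequence of primitive reattachment arrows; equivalently, any two coupling trees of the same length are connected by a finite sequence of reattachment arrows. -/

import Mathlib

/-- A pre-coupling-tree in the "linear ordering" (word) representation: `len` is the number
of leaves, and `word` lists, from left to right, the level of the branch vertex at the bottom
of each region between adjacent leaves. -/
structure PreTree where
  len : ℕ
  word : List ℕ
deriving DecidableEq

namespace PreTree

/-- A coupling tree of length `n` is represented by a word that is a permutation of the
levels `1, …, n-1`. -/
def IsCoupling (t : PreTree) : Prop := t.word.Perm (List.range' 1 (t.len - 1))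

instance : DecidablePred IsCoupling := fun _ => List.decidablePerm _ _

/-- The null coupling tree (length 0). -/
def null : PreTree := ⟨0, []⟩

/-- The unique coupling tree of length one. -/
def one : PreTree := ⟨1, []⟩

/-- The unique coupling tree of length two. -/
def two : PreTree := ⟨2, [1]⟩

/-- The (1-based) rank of `x` among the entries of `w`. -/
def rank (w : List ℕ) (x : ℕ) : ℕ := (w.filter (fun y => y ≤ x)).length

/-- Renormalise the entries of a word (with distinct entries) to `1, …, |w|`,
preserving their relative order. -/
def relabel (w : List ℕ) : List ℕ := w.map (rank w)

/-- The maximal contiguous block of the word of `t` containing the entry `i` in which all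
entries are `≥ i`; this is the word of the subtree rooted at the branch vertex of level `i`. -/
def blockAt (i : ℕ) (t : PreTree) : List ℕ :=
  let p := t.word.idxOf i
  (((t.word.take p).reverse.takeWhile (fun x => decide (i ≤ x))).reverse) ++
    i :: ((t.word.drop (p + 1)).takeWhile (fun x => decide (i ≤ x)))

/-- The word of `t` with the block at level `i` removed. -/
def restAt (i : ℕ) (t : PreTree) : List ℕ :=
  let p := t.word.idxOf i
  ((t.word.take p).reverse.dropWhile (fun x => decide (i ≤ x))).reverse ++
    ((t.word.drop (p + 1)).dropWhile (fun x => decide (i ≤ x)))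

/-- The cut operation `∨ᵢ`: the upper coupling tree obtained by cutting `t` at the branch
vertex of level `i` (the null tree if `t` has no branch at level `i`). -/
def vee (i : ℕ) (t : PreTree) : PreTree :=
  if i ∈ t.word then ⟨(blockAt i t).length + 1, relabel (blockAt i t)⟩ else null

/-- The cut operation `∧ᵢ`: the bottom coupling tree obtained by cutting `t` at the branch
vertex of level `i` (that subtree being replaced by a leaf); `t` itself if `t` has no branch
at level `i`. -/
def wedge (i : ℕ) (t : PreTree) : PreTree :=
  if i ∈ t.word then ⟨t.len - (blockAt i t).length, relabel (restAt i t)⟩ else t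

/-- The partial order `≤ₜ` on levels: `i ≤ₜ j` iff the branch vertex at level `i` is connected
to the branch vertex at level `j` without passing through levels less than `i`, i.e. iff `j`
is a level of the subtree rooted at the vertex of level `i`. -/
def LeT (t : PreTree) (i j : ℕ) : Prop := i ∈ t.word ∧ j ∈ blockAt i t

instance (t : PreTree) (i j : ℕ) : Decidable (t.LeT i j) := instDecidableAnd

/-- The left coupling tree obtained by cutting `t` at its root. -/
def left (t : PreTree) : PreTree :=
  ⟨t.word.idxOf 1 + 1, relabel (t.word.take (t.word.idxOf 1))⟩

/-- The right coupling tree obtained by cutting `t` at its root. -/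
def right (t : PreTree) : PreTree :=
  ⟨t.len - t.word.idxOf 1 - 1, relabel (t.word.drop (t.word.idxOf 1 + 1))⟩

/-- Interchange the levels `n` and `n+1` in a word. -/
def swapLevels (n : ℕ) (w : List ℕ) : List ℕ :=
  w.map (fun x => if x = n then n + 1 else if x = n + 1 then n else x)

/-- `Reatt s t` holds iff there is a reattachment arrow `p(n) : s → t` at some level `n`:
`n ≤ₛ n+1`, `n ≤ₜ n+1`, and `t` is obtained from `s` by interchanging only the levels
`n` and `n+1`. -/
def Reatt (s t : PreTree) : Prop :=
  ∃ n : ℕ, s.LeT n (n + 1) ∧ t.LeT n (n + 1) ∧ t.len = s.len ∧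
    t.word = swapLevels n s.word

end PreTree


namespace St3
open List

def MyR (w w' : List ℕ) : Prop :=
  ∃ n l₁ l₂ l₃,
    (∀ x ∈ l₁, x ≠ n ∧ x ≠ n+1) ∧ (∀ x ∈ l₂, n+1 < x) ∧ (∀ x ∈ l₃, x ≠ n ∧ x ≠ n+1) ∧
    ((w = l₁ ++ n :: (l₂ ++ (n+1) :: l₃) ∧ w' = l₁ ++ (n+1) :: (l₂ ++ n :: l₃)) ∨
     (w = l₁ ++ (n+1) :: (l₂ ++ n :: l₃) ∧ w' = l₁ ++ n :: (l₂ ++ (n+1) :: l₃)))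

lemma MyR.symm {w w' : List ℕ} (h : MyR w w') : MyR w' w := by
  obtain ⟨n, l₁, l₂, l₃, h₁, h₂, h₃, (⟨hw, hw'⟩ | ⟨hw, hw'⟩)⟩ := h
  · exact ⟨n, l₁, l₂, l₃, h₁, h₂, h₃, Or.inr ⟨hw', hw⟩⟩
  · exact ⟨n, l₁, l₂, l₃, h₁, h₂, h₃, Or.inl ⟨hw', hw⟩⟩

lemma perm_aux (l₁ l₂ l₃ : List ℕ) (a b : ℕ) :
    l₁ ++ a :: (l₂ ++ b :: l₃) ~ l₁ ++ b :: (l₂ ++ a :: l₃) := by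
  refine List.Perm.append_left l₁ ?_
  calc a :: (l₂ ++ b :: l₃) ~ a :: b :: (l₂ ++ l₃) := List.Perm.cons _ List.perm_middle
    _ ~ b :: a :: (l₂ ++ l₃) := List.Perm.swap _ _ _
    _ ~ b :: (l₂ ++ a :: l₃) := List.Perm.cons _ List.perm_middle.symm

lemma MyR.perm {w w' : List ℕ} (h : MyR w w') : w ~ w' := by
  obtain ⟨n, l₁, l₂, l₃, -, -, -, (⟨rfl, rfl⟩ | ⟨rfl, rfl⟩)⟩ := h <;>
    exact perm_aux _ _ _ _ _

lemma reach_perm {w w' : List ℕ} (h : Relation.ReflTransGen MyR w w') : w ~ w' := by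
  induction h with
  | refl => rfl
  | tail _ h ih => exact ih.trans h.perm

lemma insertIdx_append_left {p : ℕ} {x : ℕ} {l₁ l₂ : List ℕ} (h : p ≤ l₁.length) :
    List.insertIdx (l₁ ++ l₂) p x = List.insertIdx l₁ p x ++ l₂ := by
  induction l₁ generalizing p with
  | nil =>
    have : p = 0 := Nat.le_zero.mp (by simpa using h)
    subst this; simp
  | cons a l ih =>
    cases p with
    | zero => simp
    | succ p => simp only [cons_append, insertIdx_succ_cons, cons_append,
        ih (by simpa using h)]

lemma insertIdx_append_right {p : ℕ} {x : ℕ} {l₁ l₂ : List ℕ} (h : l₁.length ≤ p) :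
    List.insertIdx (l₁ ++ l₂) p x = l₁ ++ List.insertIdx l₂ (p - l₁.length) x := by
  induction l₁ generalizing p with
  | nil => simp
  | cons a l ih =>
    cases p with
    | zero => simp at h
    | succ p => simp only [cons_append, insertIdx_succ_cons, ih (by simpa using h),
        length_cons, Nat.succ_sub_succ]

lemma insertIdx_split (a b : List ℕ) (x : ℕ) :
    List.insertIdx (a ++ b) a.length x = a ++ x :: b := by
  rw [insertIdx_append_right le_rfl, Nat.sub_self, insertIdx_zero]

lemma mem_of_insertIdx {y x p : ℕ} {l : List ℕ} (hp : p ≤ l.length)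
    (h : y ∈ List.insertIdx l p x) : y = x ∨ y ∈ l := (mem_insertIdx hp).mp h

lemma lift_insert_core {l₁ l₂ l₃ : List ℕ} {n x p : ℕ}
    (h₁ : ∀ y ∈ l₁, y ≠ n ∧ y ≠ n+1) (h₂ : ∀ y ∈ l₂, n+1 < y)
    (h₃ : ∀ y ∈ l₃, y ≠ n ∧ y ≠ n+1)
    (hxn : n + 1 < x) (hp : p ≤ (l₁ ++ n :: (l₂ ++ (n+1) :: l₃)).length) :
    MyR (List.insertIdx (l₁ ++ n :: (l₂ ++ (n+1) :: l₃)) p x)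
        (List.insertIdx (l₁ ++ (n+1) :: (l₂ ++ n :: l₃)) p x) := by
  rcases le_or_gt p l₁.length with hpl | hpl
  · rw [insertIdx_append_left hpl, insertIdx_append_left hpl]
    refine ⟨n, List.insertIdx l₁ p x, l₂, l₃, ?_, h₂, h₃, Or.inl ⟨rfl, rfl⟩⟩
    intro y hy
    rcases mem_of_insertIdx hpl hy with rfl | hy
    · omega
    · exact h₁ y hy
  · rw [insertIdx_append_right hpl.le, insertIdx_append_right hpl.le]
    obtain ⟨q, hq⟩ : ∃ q, p - l₁.length = q + 1 := ⟨p - l₁.length - 1, by omega⟩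
    rw [hq, insertIdx_succ_cons, insertIdx_succ_cons]
    rcases le_or_gt q l₂.length with hql | hql
    · rw [insertIdx_append_left hql, insertIdx_append_left hql]
      refine ⟨n, l₁, List.insertIdx l₂ q x, l₃, h₁, ?_, h₃, Or.inl ⟨rfl, rfl⟩⟩
      intro y hy
      rcases mem_of_insertIdx hql hy with rfl | hy
      · omega
      · exact h₂ y hy
    · rw [insertIdx_append_right hql.le, insertIdx_append_right hql.le]
      obtain ⟨q', hq'⟩ : ∃ q', q - l₂.length = q' + 1 := ⟨q - l₂.length - 1, by omega⟩
      rw [hq', insertIdx_succ_cons, insertIdx_succ_cons]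
      have hql3 : q' ≤ l₃.length := by
        simp only [length_append, length_cons] at hp; omega
      refine ⟨n, l₁, l₂, List.insertIdx l₃ q' x, h₁, h₂, ?_, Or.inl ⟨rfl, rfl⟩⟩
      intro y hy
      rcases mem_of_insertIdx hql3 hy with rfl | hy
      · omega
      · exact h₃ y hy

lemma lift_insert {w w' : List ℕ} {x p : ℕ} (hx : ∀ y ∈ w, y < x) (hp : p ≤ w.length)
    (h : MyR w w') : MyR (List.insertIdx w p x) (List.insertIdx w' p x) := by
  obtain ⟨n, l₁, l₂, l₃, h₁, h₂, h₃, (⟨rfl, rfl⟩ | ⟨rfl, rfl⟩)⟩ := h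
  · exact lift_insert_core h₁ h₂ h₃ (hx (n+1) (by simp)) hp
  · exact (lift_insert_core h₁ h₂ h₃ (hx (n+1) (by simp)) (by simpa using hp)).symm

lemma lift_reach {x p : ℕ} {w w' : List ℕ} (hx : ∀ y ∈ w, y < x) (hp : p ≤ w.length)
    (h : Relation.ReflTransGen MyR w w') :
    Relation.ReflTransGen MyR (List.insertIdx w p x) (List.insertIdx w' p x) := by
  induction h with
  | refl => exact Relation.ReflTransGen.refl
  | tail h₁ h₂ ih =>
    have hb := reach_perm h₁
    exact ih.tail (lift_insert (fun y hy => hx y (hb.symm.subset hy))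
      (by rw [← hb.length_eq]; exact hp) h₂)

def desc (m : ℕ) : List ℕ := (range' 1 m).reverse

lemma desc_succ (m : ℕ) : desc (m+1) = (m+1) :: desc m := by
  simp [desc, range'_concat, Nat.add_comm]

lemma reach_desc : ∀ m, ∀ w : List ℕ, w ~ range' 1 m →
    Relation.ReflTransGen MyR w (desc m) := by
  intro m
  induction m with
  | zero =>
    intro w hw
    have : w = [] := by simpa using hw
    subst this
    exact Relation.ReflTransGen.refl
  | succ m ih =>
    have inner : ∀ p (a b : List ℕ), a.length = p → a ++ b ~ range' 1 m →
        Relation.ReflTransGen MyR (a ++ (m+1) :: b) (desc (m+1)) := by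
      intro p
      induction p with
      | zero =>
        intro a b ha hab
        have : a = [] := length_eq_zero_iff.mp ha
        subst this
        simp only [nil_append] at hab ⊢
        rw [desc_succ]
        have hb : ∀ y ∈ b, y < m + 1 := by
          intro y hy
          have := mem_range'_1.mp (hab.subset hy)
          omega
        have := lift_reach (x := m+1) (p := 0) hb (Nat.zero_le _) (ih b hab)
        simpa using this
      | succ p ihp =>
        intro a b ha hab
        have hlen : (a ++ b).length = m := by
          rw [hab.length_eq, length_range']
        have hm : p + 1 ≤ m := by
          have : a.length ≤ (a ++ b).length := by simp
          omega
        have hmem : m ∈ a ++ b := hab.symm.subset (mem_range'_1.mpr ⟨by omega, by omega⟩)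
        set r := (a ++ b).erase m with hrdef
        have hr : a ++ b ~ m :: r := perm_cons_erase hmem
        have hrlen : r.length + 1 = m := by
          have h' := hr.length_eq
          simp only [length_cons] at h'
          omega
        have hple : p ≤ r.length := by omega
        have hs₂ : (r.take p ++ m :: r.drop p) ~ range' 1 m := by
          refine List.perm_middle.trans ?_
          rw [take_append_drop]
          exact (hr.symm.trans hab)
        have hall : ∀ y ∈ a ++ b, y < m + 1 := by
          intro y hy
          have := mem_range'_1.mp (hab.subset hy)
          omega
        have hrall : ∀ y ∈ r, y < m + 1 :=
          fun y hy => hall y (List.erase_subset hy)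
        have hnodup : (a ++ b).Nodup := hab.nodup_iff.mpr (List.nodup_range')
        have hmnr : m ∉ r := hnodup.not_mem_erase
        have h1 : Relation.ReflTransGen MyR (a ++ b) (r.take p ++ m :: r.drop p) :=
          (ih _ hab).trans
            ((@Relation.ReflTransGen.stdSymm _ MyR ⟨fun _ _ h => MyR.symm h⟩).symm _ _ (ih _ hs₂))
        have hp1 : p + 1 ≤ (a ++ b).length := by omega
        have h2 := lift_reach hall hp1 h1
        have htk : (r.take p).length = p := by simpa using hple
        have e1 : List.insertIdx (a ++ b) (p+1) (m+1) = a ++ (m+1) :: b := by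
          rw [← ha]; exact insertIdx_split a b (m+1)
        have hlen2 : (r.take p ++ [m]).length = p + 1 := by simp [htk]
        have e2 : List.insertIdx (r.take p ++ m :: r.drop p) (p+1) (m+1)
            = r.take p ++ m :: (m+1) :: r.drop p := by
          calc List.insertIdx (r.take p ++ m :: r.drop p) (p+1) (m+1)
              = List.insertIdx ((r.take p ++ [m]) ++ r.drop p) (p+1) (m+1) := by
                rw [List.append_assoc, List.singleton_append]
            _ = (r.take p ++ [m]) ++ (m+1) :: r.drop p := by
                rw [← hlen2]; exact insertIdx_split _ _ _
            _ = r.take p ++ m :: (m+1) :: r.drop p := by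
                rw [List.append_assoc, List.singleton_append]
        rw [e1, e2] at h2
        have hcondt : ∀ y ∈ r.take p, y ≠ m ∧ y ≠ m + 1 := by
          intro y hy
          have hyr : y ∈ r := List.take_subset p r hy
          exact ⟨fun h => hmnr (h ▸ hyr), by have := hrall y hyr; omega⟩
        have hcondd : ∀ y ∈ r.drop p, y ≠ m ∧ y ≠ m + 1 := by
          intro y hy
          have hyr : y ∈ r := List.drop_subset p r hy
          exact ⟨fun h => hmnr (h ▸ hyr), by have := hrall y hyr; omega⟩
        have hstep : MyR (r.take p ++ m :: (m+1) :: r.drop p)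
            (r.take p ++ (m+1) :: m :: r.drop p) :=
          ⟨m, r.take p, [], r.drop p, hcondt, by simp, hcondd,
            Or.inl ⟨by simp, by simp⟩⟩
        have h3 := ihp (r.take p) (m :: r.drop p) htk hs₂
        exact (h2.tail hstep).trans h3
    intro w hw
    have hmem : m + 1 ∈ w := hw.symm.subset (mem_range'_1.mpr ⟨by omega, by omega⟩)
    obtain ⟨a, b, rfl⟩ := List.append_of_mem hmem
    have h2 : range' 1 (m+1) ~ (m+1) :: range' 1 m := by
      rw [range'_concat]
      simpa [Nat.add_comm] using List.perm_append_singleton (1+m) (range' 1 m)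
    have hab : a ++ b ~ range' 1 m :=
      List.Perm.cons_inv (List.perm_middle.symm.trans (hw.trans h2))
    exact inner a.length a b rfl hab

end St3

namespace St3
open List

lemma indexOf_append_cons {a : ℕ} {l₁ : List ℕ} (l₂ : List ℕ) (h : a ∉ l₁) :
    (l₁ ++ a :: l₂).idxOf a = l₁.length := by
  induction l₁ with
  | nil => simp
  | cons x xs ih =>
    simp only [mem_cons, not_or] at h
    rw [cons_append, List.idxOf_cons_ne _ (fun hx => h.1 hx.symm), ih h.2]
    rfl

lemma takeWhile_append_all {P : ℕ → Bool} {l l' : List ℕ} (h : ∀ x ∈ l, P x) :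
    takeWhile P (l ++ l') = l ++ takeWhile P l' := by
  induction l with
  | nil => simp
  | cons a t ih =>
    rw [cons_append, takeWhile_cons_of_pos (h a (mem_cons_self)),
      ih (fun x hx => h x (mem_cons_of_mem a hx)), cons_append]

lemma map_fixed {g : ℕ → ℕ} {l : List ℕ} (h : ∀ x ∈ l, g x = x) : l.map g = l := by
  rw [List.map_congr_left (g := id) h, List.map_id]

lemma swapLevels_eq₁ {n : ℕ} {l₁ l₂ l₃ : List ℕ}
    (h₁ : ∀ x ∈ l₁, x ≠ n ∧ x ≠ n+1) (h₂ : ∀ x ∈ l₂, n+1 < x)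
    (h₃ : ∀ x ∈ l₃, x ≠ n ∧ x ≠ n+1) :
    PreTree.swapLevels n (l₁ ++ n :: (l₂ ++ (n+1) :: l₃)) = l₁ ++ (n+1) :: (l₂ ++ n :: l₃) := by
  unfold PreTree.swapLevels
  rw [map_append, map_cons, map_append, map_cons]
  rw [map_fixed (fun x hx => by have := h₁ x hx; simp [this.1, this.2]),
    map_fixed (fun x hx => by have := h₂ x hx; have h1 : x ≠ n := by omega
                              have h2 : x ≠ n + 1 := by omega
                              simp [h1, h2]),
    map_fixed (fun x hx => by have := h₃ x hx; simp [this.1, this.2])]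
  have e1 : (if n = n then n + 1 else if n = n + 1 then n else n) = n + 1 := by simp
  have e2 : (if n + 1 = n then n + 1 else if n + 1 = n + 1 then n else n + 1) = n := by simp
  rw [e1, e2]

lemma swapLevels_eq₂ {n : ℕ} {l₁ l₂ l₃ : List ℕ}
    (h₁ : ∀ x ∈ l₁, x ≠ n ∧ x ≠ n+1) (h₂ : ∀ x ∈ l₂, n+1 < x)
    (h₃ : ∀ x ∈ l₃, x ≠ n ∧ x ≠ n+1) :
    PreTree.swapLevels n (l₁ ++ (n+1) :: (l₂ ++ n :: l₃)) = l₁ ++ n :: (l₂ ++ (n+1) :: l₃) := by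
  unfold PreTree.swapLevels
  rw [map_append, map_cons, map_append, map_cons]
  rw [map_fixed (fun x hx => by have := h₁ x hx; simp [this.1, this.2]),
    map_fixed (fun x hx => by have := h₂ x hx; have h1 : x ≠ n := by omega
                              have h2 : x ≠ n + 1 := by omega
                              simp [h1, h2]),
    map_fixed (fun x hx => by have := h₃ x hx; simp [this.1, this.2])]
  have e1 : (if n = n then n + 1 else if n = n + 1 then n else n) = n + 1 := by simp
  have e2 : (if n + 1 = n then n + 1 else if n + 1 = n + 1 then n else n + 1) = n := by simp
  rw [e1, e2]

lemma leT_A {L n : ℕ} {l₁ l₂ l₃ : List ℕ} (h₁ : n ∉ l₁) (h₂ : ∀ x ∈ l₂, n ≤ x) :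
    PreTree.LeT ⟨L, l₁ ++ n :: (l₂ ++ (n+1) :: l₃)⟩ n (n+1) := by
  constructor
  · simp
  · show n + 1 ∈ PreTree.blockAt n ⟨L, l₁ ++ n :: (l₂ ++ (n+1) :: l₃)⟩
    unfold PreTree.blockAt
    have hidx : (l₁ ++ n :: (l₂ ++ (n+1) :: l₃)).idxOf n = l₁.length :=
      indexOf_append_cons _ h₁
    show n + 1 ∈ _ ++ n :: takeWhile _ (List.drop (_ + 1) _)
    rw [hidx]
    have hdrop : (l₁ ++ n :: (l₂ ++ (n+1) :: l₃)).drop (l₁.length + 1)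
        = l₂ ++ (n+1) :: l₃ := by
      rw [show l₁ ++ n :: (l₂ ++ (n+1) :: l₃) = (l₁ ++ [n]) ++ (l₂ ++ (n+1) :: l₃) by
        rw [List.append_assoc, List.singleton_append]]
      exact drop_left' (by simp)
    rw [hdrop, takeWhile_append_all (fun x hx => by simpa using h₂ x hx),
      takeWhile_cons_of_pos (by simp)]
    simp

lemma leT_B {L n : ℕ} {l₁ l₂ l₃ : List ℕ} (h₁ : n ∉ l₁) (h₂ : ∀ x ∈ l₂, n < x) :
    PreTree.LeT ⟨L, l₁ ++ (n+1) :: (l₂ ++ n :: l₃)⟩ n (n+1) := by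
  have hw : l₁ ++ (n+1) :: (l₂ ++ n :: l₃) = (l₁ ++ (n+1) :: l₂) ++ n :: l₃ := by
    rw [List.append_assoc, List.cons_append]
  constructor
  · simp
  · show n + 1 ∈ PreTree.blockAt n ⟨L, l₁ ++ (n+1) :: (l₂ ++ n :: l₃)⟩
    unfold PreTree.blockAt
    show n + 1 ∈ ((List.take _ _).reverse.takeWhile _).reverse ++ n :: _
    have hnm : n ∉ l₁ ++ (n+1) :: l₂ := by
      simp only [mem_append, mem_cons, not_or]
      exact ⟨h₁, by omega, fun hx => by have := h₂ n hx; omega⟩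
    have hidx : (l₁ ++ (n+1) :: (l₂ ++ n :: l₃)).idxOf n = (l₁ ++ (n+1) :: l₂).length := by
      rw [hw]; exact indexOf_append_cons _ hnm
    rw [hidx]
    have htake : (l₁ ++ (n+1) :: (l₂ ++ n :: l₃)).take (l₁ ++ (n+1) :: l₂).length
        = l₁ ++ (n+1) :: l₂ := by
      rw [hw]; exact take_left' rfl
    rw [htake]
    have hrev : (l₁ ++ (n+1) :: l₂).reverse = l₂.reverse ++ (n+1) :: l₁.reverse := by
      rw [reverse_append, reverse_cons, List.append_assoc, List.singleton_append]
    rw [hrev, takeWhile_append_all (fun x hx => by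
        simp only [mem_reverse] at hx
        simpa using (h₂ x hx).le),
      takeWhile_cons_of_pos (by simp)]
    simp

lemma myR_reatt {L : ℕ} {w w' : List ℕ} (h : MyR w w') :
    PreTree.Reatt ⟨L, w⟩ ⟨L, w'⟩ := by
  obtain ⟨n, l₁, l₂, l₃, h₁, h₂, h₃, hc⟩ := h
  have hn1 : n ∉ l₁ := fun hx => (h₁ n hx).1 rfl
  have hA : PreTree.LeT ⟨L, l₁ ++ n :: (l₂ ++ (n+1) :: l₃)⟩ n (n+1) :=
    leT_A hn1 (fun x hx => by have := h₂ x hx; omega)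
  have hB : PreTree.LeT ⟨L, l₁ ++ (n+1) :: (l₂ ++ n :: l₃)⟩ n (n+1) :=
    leT_B hn1 (fun x hx => by have := h₂ x hx; omega)
  rcases hc with ⟨rfl, rfl⟩ | ⟨rfl, rfl⟩
  · exact ⟨n, hA, hB, rfl, (swapLevels_eq₁ h₁ h₂ h₃).symm⟩
  · exact ⟨n, hB, hA, rfl, (swapLevels_eq₂ h₁ h₂ h₃).symm⟩

end St3


/-- Every arrow of the groupoid `Cptr` is a composite of a finite (directed)
sequence of primitive reattachment arrows: since there is exactly one arrow between any two
coupling trees of the same length, this says that any two coupling trees of the same length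
are connected by a finite sequence of reattachment arrows. -/
theorem statement3 (s t : PreTree) (hs : s.IsCoupling) (ht : t.IsCoupling)
    (hlen : s.len = t.len) :
    Relation.ReflTransGen PreTree.Reatt s t := by
  
  obtain ⟨sl, sw⟩ := s
  obtain ⟨tl, tw⟩ := t
  have hl : sl = tl := hlen
  subst hl
  have hs' : List.Perm sw (List.range' 1 (sl - 1)) := hs
  have ht' : List.Perm tw (List.range' 1 (sl - 1)) := ht
  have h1 := St3.reach_desc (sl - 1) sw hs'
  have h2 := St3.reach_desc (sl - 1) tw ht'
  have h3 : Relation.ReflTransGen St3.MyR sw tw :=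
    h1.trans ((@Relation.ReflTransGen.stdSymm _ St3.MyR ⟨fun _ _ h => h.symm⟩).symm _ _ h2)
  exact Relation.ReflTransGen.lift (fun w => (⟨sl, w⟩ : PreTree))
    (fun _ _ hab => St3.myR_reatt hab) _ _ h3
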